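/- Let u ∈ (0,1), a = √(1/u² - 1), b ∈ (0,1), σ ∈ (0, 1/2), and set c = √(a² + b²), Υ(a,b) = (c - 2b)² + (1 - b²), and μ = 1 - |1 - 2u|^{2σ}. Then Υ(a,b)^{-σ} - Υ(a,0)^{-σ} ≤ μ · Υ(a,b)^{-σ}. -/

import Mathlib

open Real

theorem upsilon_rpow_diff_le (u : ℝ) (hu0 : 0 < u) (hu1 : u < 1)
    (b : ℝ) (hb0 : 0 < b) (hb1 : b < 1) (σ : ℝ) (hσ0 : 0 < σ) (hσ : σ < 1/2) :
    let a := Real.sqrt (1 / u ^ 2 - 1)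
    let c := Real.sqrt (a ^ 2 + b ^ 2)
    let Υ : ℝ → ℝ := fun b' => (Real.sqrt (a ^ 2 + b' ^ 2) - 2 * b') ^ 2 + (1 - b' ^ 2)
    let μ := 1 - |1 - 2 * u| ^ (2 * σ)
    Υ b ^ (-σ) - Υ 0 ^ (-σ) ≤ μ * Υ b ^ (-σ) := by
  intro a c Υ μ
  have hu2 : u ^ 2 < 1 := by nlinarith
  have hu2pos : (0:ℝ) < u ^ 2 := by positivity
  have hinv : u ^ 2 * (1 / u ^ 2) = 1 := by field_simp
  have ha0 : (0:ℝ) ≤ 1 / u ^ 2 - 1 := by nlinarith [hinv]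
  have ha2 : a ^ 2 = 1 / u ^ 2 - 1 := Real.sq_sqrt ha0
  have hc0 : 0 ≤ c := Real.sqrt_nonneg _
  have hc2 : c ^ 2 = 1 / u ^ 2 - 1 + b ^ 2 := by
    rw [show c = Real.sqrt (a ^ 2 + b ^ 2) from rfl, Real.sq_sqrt (by positivity), ha2]
  have hΥb : Υ b = (c - 2 * b) ^ 2 + (1 - b ^ 2) := rfl
  have hΥ0 : Υ 0 = 1 / u ^ 2 := by
    show (Real.sqrt (a ^ 2 + 0 ^ 2) - 2 * 0) ^ 2 + (1 - 0 ^ 2) = 1 / u ^ 2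
    rw [show a ^ 2 + 0 ^ 2 = a ^ 2 by ring]
    rw [Real.sqrt_sq (Real.sqrt_nonneg _)]
    rw [show (a - 2 * 0) ^ 2 + (1 - 0 ^ 2) = a ^ 2 + 1 by ring, ha2]; ring
  have hμ : μ = 1 - |1 - 2 * u| ^ (2 * σ) := rfl
  clear_value a c Υ μ
  have hb2 : (0:ℝ) ≤ 1 - b ^ 2 := by nlinarith
  have hΥbpos : 0 < Υ b := by rw [hΥb]; nlinarith [sq_nonneg (c - 2 * b)]
  have hΥ0pos : 0 < Υ 0 := by rw [hΥ0]; positivity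
  -- key inequality
  have hcc : (u * b * c) ^ 2 = b ^ 2 - u ^ 2 * b ^ 2 + u ^ 2 * b ^ 4 := by
    have h : (u * b * c) ^ 2 = u ^ 2 * b ^ 2 * c ^ 2 := by ring
    rw [h, hc2]; field_simp
  have hs : (u * b * c) ^ 2 ≤ (1 - u + u * b ^ 2) ^ 2 := by
    nlinarith [hcc, mul_nonneg (sq_nonneg (1 - u)) hb2]
  have hpos : 0 < 1 - u + u * b ^ 2 := by nlinarith
  have hkey : u * b * c ≤ 1 - u + u * b ^ 2 := by
    by_contra h
    push_neg at h
    have h2 : (1 - u + u * b ^ 2) ^ 2 < (u * b * c) ^ 2 :=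
      pow_lt_pow_left₀ h hpos.le two_ne_zero
    linarith [hs]
  have key2 : (1 - 2 * u) ^ 2 ≤ 1 + 4 * u ^ 2 * b ^ 2 - 4 * u ^ 2 * (b * c) := by
    have h4 := mul_le_mul_of_nonneg_left hkey (by positivity : (0:ℝ) ≤ 4 * u)
    nlinarith [h4]
  have hmain : (1 - 2 * u) ^ 2 * Υ 0 ≤ Υ b := by
    rw [hΥ0, hΥb]
    have hrhs : (c - 2 * b) ^ 2 + (1 - b ^ 2) = 1 / u ^ 2 + 4 * b ^ 2 - 4 * (b * c) := by
      have h : (c - 2 * b) ^ 2 + (1 - b ^ 2) = c ^ 2 + 3 * b ^ 2 + 1 - 4 * (b * c) := by ring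
      rw [h, hc2]; ring
    rw [hrhs, ← mul_le_mul_iff_right₀ hu2pos]
    have e2 : u ^ 2 * ((1 - 2 * u) ^ 2 * (1 / u ^ 2)) = (1 - 2 * u) ^ 2 := by
      field_simp
    have e3 : u ^ 2 * (1 / u ^ 2 + 4 * b ^ 2 - 4 * (b * c))
        = 1 + 4 * u ^ 2 * b ^ 2 - 4 * u ^ 2 * (b * c) := by
      field_simp
    rw [e2, e3]; exact key2
  -- reduce to rpow inequality
  have h1 : (1 - 2 * u) ^ 2 / Υ b ≤ 1 / Υ 0 := by
    rw [div_le_div_iff₀ hΥbpos hΥ0pos]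
    calc (1 - 2 * u) ^ 2 * Υ 0 ≤ Υ b := hmain
      _ = 1 * Υ b := (one_mul _).symm
  have h2 : ((1 - 2 * u) ^ 2 / Υ b) ^ σ ≤ (1 / Υ 0) ^ σ :=
    Real.rpow_le_rpow (by positivity) h1 hσ0.le
  have habs : |1 - 2 * u| ^ (2 * σ) = ((1 - 2 * u) ^ 2) ^ σ := by
    rw [← sq_abs, ← Real.rpow_natCast |1 - 2 * u| 2, ← Real.rpow_mul (abs_nonneg _)]
    norm_num
  have hfin : |1 - 2 * u| ^ (2 * σ) * Υ b ^ (-σ) ≤ Υ 0 ^ (-σ) := by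
    calc |1 - 2 * u| ^ (2 * σ) * Υ b ^ (-σ)
        = ((1 - 2 * u) ^ 2 / Υ b) ^ σ := by
          rw [habs, Real.div_rpow (sq_nonneg _) hΥbpos.le, Real.rpow_neg hΥbpos.le,
            div_eq_mul_inv]
      _ ≤ (1 / Υ 0) ^ σ := h2
      _ = Υ 0 ^ (-σ) := by
          rw [one_div, Real.inv_rpow hΥ0pos.le, ← Real.rpow_neg hΥ0pos.le]
  rw [hμ, sub_mul, one_mul]
  linarith [hfin]
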